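/- arXiv:2401.16493 — 3 statements merged into one kernel-verified Lean document; each statement's English description precedes it below -/
import Mathlib

section
/- For all natural numbers n ≥ 1 and 2 ≤ k ≤ n+1, the numbers A_{n,k} := ((2k-1)/(2n+1)) * binomial(2n+1, n+1-k) satisfy the recurrence A_{n,k} = A_{n-1,k-1} + 2*A_{n-1,k} + A_{n-1,k+1}. -/
noncomputable def catalanTriangleA (n k : ℕ) : ℚ :=
  if 1 ≤ k ∧ k ≤ n + 1 then ((2 * k - 1 : ℚ)) / (2 * n + 1) * ((2 * n + 1).choose (n + 1 - k)) else 0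

theorem catalanTriangleA_recurrence (n k : ℕ) (hn : 1 ≤ n) (hk : 2 ≤ k) (hkn : k ≤ n + 1) :
    catalanTriangleA n k =
      catalanTriangleA (n - 1) (k - 1) + 2 * catalanTriangleA (n - 1) k +
        catalanTriangleA (n - 1) (k + 1) := by
  obtain ⟨m, rfl⟩ : ∃ m, n = m + 1 := ⟨n - 1, (Nat.succ_pred_eq_of_pos hn).symm⟩
  simp only [Nat.add_sub_cancel] at *
  rcases Nat.lt_or_ge m k with hmk | hmk
  · -- k = m+1 or k = m+2
    have hcase : k = m + 1 ∨ k = m + 2 := by omega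
    rcases hcase with rfl | rfl
    · -- k = m+1, need m ≥ 1
      obtain ⟨p, rfl⟩ : ∃ p, m = p + 1 := ⟨m - 1, by omega⟩
      simp only [catalanTriangleA]
      rw [if_pos (by omega), if_pos (by omega), if_pos (by omega), if_neg (by omega)]
      rw [show p + 1 + 1 + 1 - (p + 1 + 1) = 1 from by omega,
        show p + 1 + 1 - (p + 1 + 1 - 1) = 1 from by omega,
        show p + 1 + 1 - (p + 1 + 1) = 0 from by omega]
      push_cast [Nat.choose_one_right, Nat.choose_zero_right]
      have h1 : (2 * ((p:ℚ)+1) + 1) ≠ 0 := by positivity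
      have h2 : (2 * ((p:ℚ)+1+1) + 1) ≠ 0 := by positivity
      field_simp
      ring
    · -- k = m+2
      simp only [catalanTriangleA]
      rw [if_pos (by omega), if_pos (by omega), if_neg (by omega), if_neg (by omega)]
      rw [show m + 1 + 1 - (m + 2) = 0 from by omega,
        show m + 1 - (m + 2 - 1) = 0 from by omega]
      push_cast [Nat.choose_zero_right]
      have h1 : (2 * (m:ℚ) + 1) ≠ 0 := by positivity
      have h2 : (2 * ((m:ℚ)+1) + 1) ≠ 0 := by positivity
      field_simp
      ring
  · -- k ≤ m : all terms active; write m = k + j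
    obtain ⟨j, rfl⟩ : ∃ j, m = k + j := ⟨m - k, by omega⟩
    obtain ⟨l, rfl⟩ : ∃ l, k = l + 2 := ⟨k - 2, by omega⟩
    simp only [catalanTriangleA]
    rw [if_pos (by omega), if_pos (by omega), if_pos (by omega), if_pos (by omega)]
    rw [show l + 2 + j + 1 + 1 - (l + 2) = j + 2 from by omega,
      show l + 2 + j + 1 - (l + 2 - 1) = j + 2 from by omega,
      show l + 2 + j + 1 - (l + 2) = j + 1 from by omega,
      show l + 2 + j + 1 - (l + 2 + 1) = j from by omega,
      show l + 2 - 1 = l + 1 from by omega]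
    set M := 2 * (l + 2 + j) + 1 with hM
    have h1 : (2 * (l + 2 + j + 1) + 1).choose (j + 2)
        = M.choose (j + 2) + 2 * M.choose (j + 1) + M.choose j := by
      rw [show 2 * (l + 2 + j + 1) + 1 = (M + 1) + 1 from by omega]
      rw [Nat.choose_succ_succ (M + 1) (j + 1), Nat.choose_succ_succ M (j + 1),
        Nat.choose_succ_succ M j]
      ring
    have ha : M.choose (j + 2) * (j + 2) = M.choose (j + 1) * (2 * l + j + 4) := by
      rw [Nat.choose_succ_right_eq]
      congr 1
      omega
    have hb : M.choose (j + 1) * (j + 1) = M.choose j * (2 * l + j + 5) := by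
      rw [Nat.choose_succ_right_eq]
      congr 1
      omega
    have ha' : (M.choose (j + 2) : ℚ) * (j + 2) = M.choose (j + 1) * (2 * l + j + 4) := by
      exact_mod_cast congrArg (Nat.cast : ℕ → ℚ) ha
    have hb' : (M.choose (j + 1) : ℚ) * (j + 1) = M.choose j * (2 * l + j + 5) := by
      exact_mod_cast congrArg (Nat.cast : ℕ → ℚ) hb
    rw [h1]
    have hMQ : (M : ℚ) = 2 * (l + 2 + j) + 1 := by exact_mod_cast congrArg (Nat.cast : ℕ → ℚ) hM
    push_cast [hMQ]
    have d1 : (2 * ((l:ℚ) + 2 + j) + 1) ≠ 0 := by positivity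
    have d2 : (2 * ((l:ℚ) + 2 + j + 1) + 1) ≠ 0 := by positivity
    field_simp
    linear_combination (4:ℚ) * ha' + (4:ℚ) * hb'
end

section
/- For every integer q ≥ 1 and |z| < 1/4, the q-th power of the Catalan generating function satisfies C(z)^q = Σ_{n≥0} (q/(n+q)) * binomial(2n-1+q, n) * z^n. -/
noncomputable def catalanGF (z : ℂ) : ℂ := ∑' n : ℕ, (catalan n : ℂ) * z ^ n

namespace CatalanGFAux

open PowerSeries Finset

/-- The coefficients of `C(z)^q`. -/
noncomputable def f (q n : ℕ) : ℂ := ((q : ℂ) / (n + q)) * ((2 * n + q - 1).choose n : ℂ)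

/-- The formal Catalan power series. -/
noncomputable def C : PowerSeries ℂ := PowerSeries.mk fun n => (catalan n : ℂ)

lemma C_eq : C = 1 + X * C ^ 2 := by
  ext n
  cases n with
  | zero => simp [C]
  | succ n =>
      rw [map_add, coeff_succ_X_mul]
      simp only [C, coeff_mk, pow_two, PowerSeries.coeff_mul, coeff_one,
        Nat.succ_ne_zero, if_false, zero_add, catalan_succ']
      push_cast
      rfl

lemma natC_ne (m : ℕ) (hm : m ≠ 0) : ((m : ℂ)) ≠ 0 := Nat.cast_ne_zero.mpr hm

lemma f_one (n : ℕ) : f 1 n = (catalan n : ℂ) := by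
  have h := succ_mul_catalan_eq_centralBinom n
  have h' : ((n : ℂ) + 1) * (catalan n : ℂ) = (n.centralBinom : ℂ) := by exact_mod_cast h
  have hn : ((n : ℂ) + 1) ≠ 0 := by
    intro hE
    exact natC_ne (n + 1) (by omega) (by push_cast; linear_combination hE)
  have hcb : (2 * n + 1 - 1).choose n = n.centralBinom := by
    simp [Nat.centralBinom]
  rw [f, hcb]
  push_cast
  field_simp
  linear_combination -h'

lemma f_rec (q n : ℕ) : f (q + 1) (n + 1) + f (q + 3) n = f (q + 2) (n + 1) := by
  have hA : (2 * (n + 1) + (q + 1) - 1) = 2 * n + q + 2 := by omega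
  have hB : (2 * n + (q + 3) - 1) = 2 * n + q + 2 := by omega
  have hC : (2 * (n + 1) + (q + 2) - 1) = 2 * n + q + 3 := by omega
  have hpascal : (2 * n + q + 3).choose (n + 1) =
      (2 * n + q + 2).choose n + (2 * n + q + 2).choose (n + 1) := by
    rw [show 2 * n + q + 3 = (2 * n + q + 2) + 1 from rfl, Nat.choose_succ_succ]
  have hkey : (2 * n + q + 2).choose (n + 1) * (n + 1) =
      (2 * n + q + 2).choose n * (n + q + 2) := by
    rw [Nat.choose_succ_right_eq]
    congr 1
    omega
  set A : ℕ := (2 * n + q + 2).choose (n + 1) with hA'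
  set B : ℕ := (2 * n + q + 2).choose n with hB'
  have hkeyC : (A : ℂ) * ((n : ℂ) + 1) = (B : ℂ) * ((n : ℂ) + (q : ℂ) + 2) := by
    exact_mod_cast hkey
  simp only [f, hA, hB, hC, hpascal]
  push_cast
  have h1 : (n : ℂ) + 1 + ((q : ℂ) + 1) ≠ 0 := by
    intro hE; exact natC_ne (n + q + 2) (by omega) (by push_cast; linear_combination hE)
  have h2 : (n : ℂ) + ((q : ℂ) + 3) ≠ 0 := by
    intro hE; exact natC_ne (n + q + 3) (by omega) (by push_cast; linear_combination hE)
  have h3 : (n : ℂ) + 1 + ((q : ℂ) + 2) ≠ 0 := by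
    intro hE; exact natC_ne (n + q + 3) (by omega) (by push_cast; linear_combination hE)
  have gen : ∀ en eq a b : ℂ, a * (en + 1) = b * (en + eq + 2) →
      en + 1 + (eq + 1) ≠ 0 → en + (eq + 3) ≠ 0 → en + 1 + (eq + 2) ≠ 0 →
      (eq + 1) / (en + 1 + (eq + 1)) * a + (eq + 3) / (en + (eq + 3)) * b
        = (eq + 2) / (en + 1 + (eq + 2)) * (b + a) := by
    intro en eq a b h h1 h2 h3
    field_simp
    linear_combination (-(en + eq + 3)) * h
  exact gen (n : ℂ) (q : ℂ) (A : ℂ) (B : ℂ) hkeyC h1 h2 h3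

lemma coeff_C_pow (n : ℕ) : ∀ q : ℕ, coeff n (C ^ (q + 1)) = f (q + 1) n := by
  induction n with
  | zero =>
      intro q
      have hc : constantCoeff C = 1 := by simp [C, ← coeff_zero_eq_constantCoeff]
      rw [coeff_zero_eq_constantCoeff, map_pow, hc, one_pow]
      have hq : ((q : ℂ) + 1) ≠ 0 := by
        intro hE; exact natC_ne (q + 1) (by omega) (by push_cast; linear_combination hE)
      simp only [f, Nat.choose_zero_right, Nat.cast_zero, zero_add, Nat.cast_one, mul_one]
      push_cast
      exact (div_self hq).symm
  | succ n ih =>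
      intro q
      induction q with
      | zero =>
          rw [pow_one]
          simp only [C, coeff_mk]
          exact (f_one (n + 1)).symm
      | succ q ihq =>
          have hrec : C ^ (q + 2) = C ^ (q + 1) + X * C ^ (q + 3) := by
            calc C ^ (q + 2) = C ^ (q + 1) * C := by ring
            _ = C ^ (q + 1) * (1 + X * C ^ 2) := by rw [← C_eq]
            _ = C ^ (q + 1) + X * C ^ (q + 3) := by ring
          rw [hrec, map_add, coeff_succ_X_mul, ihq, ih (q + 2)]
          exact f_rec q n

lemma conv (q n : ℕ) :
    ∑ kl ∈ antidiagonal n, f (q + 1) kl.1 * (catalan kl.2 : ℂ) = f (q + 2) n := by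
  have h : coeff n (C ^ (q + 1) * C) = coeff n (C ^ (q + 2)) := by
    rw [← pow_succ]
  rw [PowerSeries.coeff_mul, coeff_C_pow n (q + 1)] at h
  rw [← h]
  refine Finset.sum_congr rfl fun kl _ => ?_
  rw [coeff_C_pow kl.1 q]
  simp [C]

lemma choose_le_two_pow (m k : ℕ) : m.choose k ≤ 2 ^ m := by
  rcases le_or_gt k m with h | h
  · calc m.choose k ≤ ∑ i ∈ range (m + 1), m.choose i :=
        Finset.single_le_sum (fun i _ => Nat.zero_le _) (mem_range.mpr (by omega))
    _ = 2 ^ m := Nat.sum_range_choose m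
  · rw [Nat.choose_eq_zero_of_lt h]; exact Nat.zero_le _

lemma f_norm_le (q n : ℕ) : ‖f (q + 1) n‖ ≤ (2 : ℝ) ^ (q + 1) * 4 ^ n := by
  have hd : ((n : ℂ) + ((q : ℕ) + 1 : ℕ)) = (((n + q + 1 : ℕ)) : ℂ) := by push_cast; ring
  have h1 : ‖((q + 1 : ℕ) : ℂ) / ((n : ℂ) + ((q + 1 : ℕ) : ℂ))‖ ≤ 1 := by
    rw [norm_div]
    have : ((n : ℂ) + ((q + 1 : ℕ) : ℂ)) = (((n + q + 1 : ℕ)) : ℂ) := by push_cast; ring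
    rw [this]
    simp only [Complex.norm_natCast]
    rw [div_le_one (by positivity)]
    exact_mod_cast (by omega : q + 1 ≤ n + q + 1)
  have h2 : ((2 * n + (q + 1) - 1).choose n : ℝ) ≤ (2 : ℝ) ^ (q + 1) * 4 ^ n := by
    have hb : (2 * n + (q + 1) - 1).choose n ≤ 2 ^ (2 * n + q) := by
      have := choose_le_two_pow (2 * n + (q + 1) - 1) n
      have he : 2 * n + (q + 1) - 1 = 2 * n + q := by omega
      rwa [he] at this
    calc ((2 * n + (q + 1) - 1).choose n : ℝ) ≤ (2 : ℝ) ^ (2 * n + q) := by exact_mod_cast hb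
    _ = (2 : ℝ) ^ q * 4 ^ n := by
        rw [show (4 : ℝ) = 2 ^ 2 by norm_num, ← pow_mul, ← pow_add]; ring_nf
    _ ≤ (2 : ℝ) ^ (q + 1) * 4 ^ n := by
        have : (2 : ℝ) ^ q ≤ 2 ^ (q + 1) := by
          apply pow_le_pow_right₀ (by norm_num) (by omega)
        nlinarith [pow_pos (by norm_num : (0:ℝ) < 4) n]
  calc ‖f (q + 1) n‖ = ‖((q + 1 : ℕ) : ℂ) / ((n : ℂ) + ((q + 1 : ℕ) : ℂ))‖ *
        ‖((2 * n + (q + 1) - 1).choose n : ℂ)‖ := by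
        rw [f, norm_mul]
  _ ≤ 1 * ((2 : ℝ) ^ (q + 1) * 4 ^ n) := by
        apply mul_le_mul h1 ?_ (norm_nonneg _) (by norm_num)
        rw [Complex.norm_natCast]; exact h2
  _ = (2 : ℝ) ^ (q + 1) * 4 ^ n := by ring

lemma summable_norm_f (q : ℕ) (z : ℂ) (hz : ‖z‖ < 1 / 4) :
    Summable fun n => ‖f (q + 1) n * z ^ n‖ := by
  refine Summable.of_nonneg_of_le (f := fun n => (2 : ℝ) ^ (q + 1) * (4 * ‖z‖) ^ n)
    (fun n => norm_nonneg _) (fun n => ?_) ?_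
  · rw [norm_mul, norm_pow]
    calc ‖f (q + 1) n‖ * ‖z‖ ^ n ≤ ((2 : ℝ) ^ (q + 1) * 4 ^ n) * ‖z‖ ^ n :=
          mul_le_mul_of_nonneg_right (f_norm_le q n) (by positivity)
    _ = (2 : ℝ) ^ (q + 1) * (4 ^ n * ‖z‖ ^ n) := by ring
    _ = (2 : ℝ) ^ (q + 1) * ((4 * ‖z‖) ^ n) := by
        rw [mul_pow]
  · apply Summable.mul_left
    apply summable_geometric_of_lt_one (by positivity)
    linarith

lemma tsum_f (q : ℕ) (z : ℂ) (hz : ‖z‖ < 1 / 4) :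
    catalanGF z ^ (q + 1) = ∑' n : ℕ, f (q + 1) n * z ^ n := by
  induction q with
  | zero =>
      rw [pow_one, catalanGF]
      exact tsum_congr fun n => by rw [f_one]
  | succ q ih =>
      have hcat : (fun n : ℕ => (catalan n : ℂ) * z ^ n) = fun n => f 1 n * z ^ n := by
        funext n; rw [f_one]
      have hsum1 : Summable fun n => ‖f (q + 1) n * z ^ n‖ := summable_norm_f q z hz
      have hsum2 : Summable fun n => ‖(catalan n : ℂ) * z ^ n‖ :=
        (summable_norm_f 0 z hz).congr fun n => by rw [f_one]
      calc catalanGF z ^ (q + 2) = catalanGF z ^ (q + 1) * catalanGF z := by ring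
      _ = (∑' n, f (q + 1) n * z ^ n) * (∑' n, (catalan n : ℂ) * z ^ n) := by
          rw [ih, catalanGF]
      _ = ∑' n, ∑ kl ∈ antidiagonal n, (f (q + 1) kl.1 * z ^ kl.1) *
            ((catalan kl.2 : ℂ) * z ^ kl.2) :=
          tsum_mul_tsum_eq_tsum_sum_antidiagonal_of_summable_norm hsum1 hsum2
      _ = ∑' n, f (q + 2) n * z ^ n := by
          refine tsum_congr fun n => ?_
          rw [← conv q n, Finset.sum_mul]
          refine Finset.sum_congr rfl fun kl hkl => ?_
          have : kl.1 + kl.2 = n := Finset.HasAntidiagonal.mem_antidiagonal.mp hkl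
          rw [← this, pow_add]
          ring

end CatalanGFAux

theorem catalanGF_pow (q : ℕ) (hq : 1 ≤ q) (z : ℂ) (hz : ‖z‖ < 1 / 4) :
    catalanGF z ^ q =
      ∑' n : ℕ, ((q : ℂ) / (n + q)) * ((2 * n + q - 1).choose n : ℂ) * z ^ n := by
  obtain ⟨q', rfl⟩ : ∃ q', q = q' + 1 := ⟨q - 1, by omega⟩
  rw [CatalanGFAux.tsum_f q' z hz]
  exact tsum_congr fun n => by simp only [CatalanGFAux.f]
end

section
/- For every k ≥ 1 and |z| < 1/4, Σ_{n=k}^∞ B_{n,k} z^n = z^k C(z)^{2k} = (C(z) - 1)^k, where B_{n,k} = (k/n) binomial(2n, n-k). -/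
open Finset

noncomputable def catalanTriangleB (n k : ℕ) : ℂ :=
  (k : ℂ) / n * ((2 * n).choose (n - k))

/-- Ballot-type numbers: `e b m` is the coefficient of `z^m` in `C(z)^(b+1)`. -/
private def e (b m : ℕ) : ℤ := ((2*m + b).choose m : ℤ) - ((2*m + b).choose (m + b + 1))

private lemma e_zero_right (b : ℕ) : e b 0 = 1 := by
  have h : (2*0+b).choose (0+b+1) = 0 := Nat.choose_eq_zero_of_lt (by omega)
  simp [e, h]

private lemma e_zero_succ (m : ℕ) : e 0 (m+1) = e 1 m := by
  have h1 : 2*(m+1) + 0 = (2*m+1) + 1 := by ring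
  have h2 : (m+1) + 0 + 1 = (m+1) + 1 := by ring
  have h3 : m + 1 + 1 = m + 2 := by ring
  simp only [e]
  rw [h1, h2, h3, Nat.choose_succ_succ' (2*m+1) m, Nat.choose_succ_succ' (2*m+1) (m+1)]
  push_cast
  ring

private lemma e_rec (b m : ℕ) : e (b+1) (m+1) = e b (m+1) + e (b+2) m := by
  have h1 : 2*(m+1) + (b+1) = (2*m+b+2) + 1 := by ring
  have h2 : 2*(m+1) + b = 2*m+b+2 := by ring
  have h3 : 2*m + (b+2) = 2*m+b+2 := by ring
  have h4 : (m+1) + (b+1) + 1 = (m+b+2) + 1 := by ring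
  have h5 : (m+1) + b + 1 = m+b+2 := by ring
  have h6 : m + (b+2) + 1 = (m+b+2) + 1 := by ring
  simp only [e, h1, h2, h3, h4, h5, h6]
  rw [Nat.choose_succ_succ' (2*m+b+2) m, Nat.choose_succ_succ' (2*m+b+2) (m+b+2)]
  push_cast
  ring

private lemma e_conv : ∀ n b, (∑ i ∈ Finset.range (n+1), e b i * e 0 (n-i)) = e (b+1) n := by
  intro n
  induction n with
  | zero => intro b; simp [e_zero_right]
  | succ n ih =>
    intro b
    induction b with
    | zero =>
      rw [Finset.sum_range_succ' (fun i => e 0 i * e 0 (n+1-i)) (n+1)]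
      have : (∑ i ∈ Finset.range (n+1), e 0 (i+1) * e 0 (n+1-(i+1)))
          = ∑ i ∈ Finset.range (n+1), e 1 i * e 0 (n-i) := by
        refine Finset.sum_congr rfl fun i hi => ?_
        rw [e_zero_succ, show n+1-(i+1) = n-i by omega]
      rw [this, ih 1, e_zero_right, e_rec 0 n]
      simp only [Nat.sub_zero, one_mul]
      ring
    | succ b ihb =>
      rw [Finset.sum_range_succ' (fun i => e (b+1) i * e 0 (n+1-i)) (n+1)]
      have key : (∑ i ∈ Finset.range (n+1), e (b+1) (i+1) * e 0 (n+1-(i+1)))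
          = (∑ i ∈ Finset.range (n+1), e b (i+1) * e 0 (n-i))
            + ∑ i ∈ Finset.range (n+1), e (b+2) i * e 0 (n-i) := by
        rw [← Finset.sum_add_distrib]
        refine Finset.sum_congr rfl fun i hi => ?_
        rw [e_rec, show n+1-(i+1) = n-i by omega]
        ring
      have h2 : (∑ i ∈ Finset.range (n+1), e b (i+1) * e 0 (n-i))
          = e (b+1) (n+1) - e 0 (n+1) := by
        have := Finset.sum_range_succ' (fun i => e b i * e 0 (n+1-i)) (n+1)
        rw [ihb] at this
        have h3 : (∑ i ∈ Finset.range (n+1), e b (i+1) * e 0 (n+1-(i+1)))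
            = ∑ i ∈ Finset.range (n+1), e b (i+1) * e 0 (n-i) := by
          refine Finset.sum_congr rfl fun i hi => ?_
          rw [show n+1-(i+1) = n-i by omega]
        rw [h3, e_zero_right] at this
        simp only [Nat.sub_zero, one_mul] at this
        linarith
      rw [key, h2, ih (b+2), e_zero_right, e_rec (b+1) n]
      simp only [Nat.sub_zero, one_mul]
      ring

private lemma e_mulId (b n : ℕ) :
    (2*n + b + 1) * e b n = (b+1) * ((2*n + b + 1).choose n : ℤ) := by
  cases n with
  | zero => simp [e_zero_right]
  | succ m =>
    have h1 : 2*(m+1) + b = 2*m+b+2 := by ring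
    have hsymm : (2*m+b+2).choose ((m+1) + b + 1) = (2*m+b+2).choose m := by
      rw [← Nat.choose_symm (by omega)]
      congr 1
      omega
    have hrec0 := Nat.choose_succ_right_eq (2*m+b+2) m
    rw [show (2*m+b+2) - m = m+b+2 by omega] at hrec0
    have hrec : ((2*m+b+2).choose (m+1) : ℤ) * (m+1)
        = ((2*m+b+2).choose m : ℤ) * (m+b+2) := by exact_mod_cast hrec0
    have hpas := Nat.choose_succ_succ' (2*m+b+2) m
    have h2 : 2*(m+1) + b + 1 = (2*m+b+2) + 1 := by ring
    simp only [e, h1, hsymm, h2, hpas]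
    push_cast
    linear_combination (2:ℤ) * hrec

private lemma e_zero_eq_catalan (m : ℕ) : e 0 m = (catalan m : ℤ) := by
  have hc : ((m+1 : ℕ) : ℤ) * catalan m = ((2*m).choose m : ℤ) := by
    exact_mod_cast congrArg (Nat.cast : ℕ → ℤ) (succ_mul_catalan_eq_centralBinom m)
  have hr0 := Nat.choose_succ_right_eq (2*m) m
  rw [show 2*m - m = m by omega] at hr0
  have hr : ((2*m).choose (m+1) : ℤ) * (m+1) = ((2*m).choose m : ℤ) * m := by
    exact_mod_cast hr0
  have key : ((m+1 : ℕ) : ℤ) * e 0 m = ((m+1 : ℕ) : ℤ) * catalan m := by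
    simp only [e, Nat.add_zero, show m + 0 + 1 = m + 1 from rfl]
    push_cast at hc hr ⊢
    linear_combination -hc - hr
  exact mul_left_cancel₀ (by positivity) key

private lemma choose_le_two_pow' (N k : ℕ) : N.choose k ≤ 2 ^ N := by
  rcases le_or_gt k N with h | h
  · calc N.choose k ≤ ∑ m ∈ Finset.range (N+1), N.choose m :=
        Finset.single_le_sum (fun i _ => Nat.zero_le _) (Finset.mem_range.mpr (by omega))
    _ = 2 ^ N := Nat.sum_range_choose N
  · simp [Nat.choose_eq_zero_of_lt h]

private lemma e_abs_le (b n : ℕ) : |e b n| ≤ 2 ^ (2*n+b+1) := by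
  have h1 : (2*n+b).choose n ≤ 2 ^ (2*n+b) := choose_le_two_pow' _ _
  have h2 : (2*n+b).choose (n+b+1) ≤ 2 ^ (2*n+b) := choose_le_two_pow' _ _
  have : |e b n| ≤ ((2*n+b).choose n : ℤ) + ((2*n+b).choose (n+b+1) : ℤ) := by
    simp only [e]
    rw [abs_sub_comm]
    refine (abs_sub _ _).trans ?_
    simp only [abs_of_nonneg (Int.natCast_nonneg _)]
    omega
  refine this.trans ?_
  calc ((2*n+b).choose n : ℤ) + ((2*n+b).choose (n+b+1) : ℤ)
      ≤ (2:ℤ) ^ (2*n+b) + 2 ^ (2*n+b) := by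
        gcongr <;> exact_mod_cast ‹_›
    _ = 2 ^ (2*n+b+1) := by ring

section analytic
variable {z : ℂ}

private lemma summable_norm_e (b : ℕ) (hz : ‖z‖ < 1 / 4) :
    Summable (fun n => ‖(e b n : ℂ) * z ^ n‖) := by
  have h4 : 4 * ‖z‖ < 1 := by linarith
  have hge : Summable (fun n : ℕ => (2:ℝ) ^ (b+1) * (4 * ‖z‖) ^ n) :=
    (summable_geometric_of_lt_one (by positivity) h4).mul_left _
  refine Summable.of_nonneg_of_le (fun n => norm_nonneg _) (fun n => ?_) hge
  rw [norm_mul, norm_pow]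
  have habs : ‖(e b n : ℂ)‖ = |(e b n : ℝ)| := by
    rw [show ((e b n : ℂ)) = ((e b n : ℝ) : ℂ) by push_cast; ring, Complex.norm_real]
    rfl
  have hle : |(e b n : ℝ)| ≤ 2 ^ (2*n+b+1) := by
    have := e_abs_le b n
    calc |(e b n : ℝ)| = ((|e b n| : ℤ) : ℝ) := by push_cast [Int.cast_abs]; ring
    _ ≤ ((2 ^ (2*n+b+1) : ℤ) : ℝ) := by exact_mod_cast this
    _ = 2 ^ (2*n+b+1) := by push_cast; ring
  calc ‖(e b n : ℂ)‖ * ‖z‖ ^ n ≤ 2 ^ (2*n+b+1) * ‖z‖ ^ n := by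
        rw [habs]; gcongr
  _ = (2:ℝ) ^ (b+1) * (4 * ‖z‖) ^ n := by
        rw [show 2*n+b+1 = (b+1) + 2*n by ring, pow_add, pow_mul, mul_pow]
        norm_num
        ring

private lemma catalanGF_eq_tsum_e (z : ℂ) :
    catalanGF z = ∑' n : ℕ, (e 0 n : ℂ) * z ^ n := by
  unfold catalanGF
  congr 1
  funext n
  rw [e_zero_eq_catalan]
  push_cast
  ring

private lemma gf_pow (hz : ‖z‖ < 1 / 4) :
    ∀ b : ℕ, (∑' n : ℕ, (e b n : ℂ) * z ^ n) = catalanGF z ^ (b+1) := by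
  intro b
  induction b with
  | zero => rw [← catalanGF_eq_tsum_e, pow_one]
  | succ b ih =>
    have hprod := tsum_mul_tsum_eq_tsum_sum_range_of_summable_norm
      (f := fun n => (e b n : ℂ) * z ^ n) (g := fun n => (e 0 n : ℂ) * z ^ n)
      (summable_norm_e b hz) (summable_norm_e 0 hz)
    rw [ih, ← catalanGF_eq_tsum_e] at hprod
    rw [pow_succ, hprod]
    congr 1
    funext n
    rw [← e_conv n b]
    rw [eq_comm]
    push_cast
    rw [Finset.sum_mul]
    refine Finset.sum_congr rfl fun i hi => ?_
    have hin : i ≤ n := by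
      have := Finset.mem_range.mp hi; omega
    have hzz : z ^ i * z ^ (n - i) = z ^ n := by
      rw [← pow_add]
      congr 1
      omega
    calc (e b i : ℂ) * z ^ i * ((e 0 (n-i) : ℂ) * z ^ (n-i))
        = (e b i : ℂ) * (e 0 (n-i) : ℂ) * (z ^ i * z ^ (n-i)) := by ring
      _ = (e b i : ℂ) * (e 0 (n-i) : ℂ) * z ^ n := by rw [hzz]

private lemma catalanGF_quadratic (hz : ‖z‖ < 1 / 4) :
    catalanGF z - 1 = z * catalanGF z ^ 2 := by
  have hs : Summable (fun n : ℕ => (e 0 n : ℂ) * z ^ n) := (summable_norm_e 0 hz).of_norm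
  have h0 := Summable.tsum_eq_zero_add hs
  have h1 : (∑' n : ℕ, (e 0 (n+1) : ℂ) * z ^ (n+1)) = z * ∑' n : ℕ, (e 1 n : ℂ) * z ^ n := by
    rw [← tsum_mul_left]
    congr 1
    funext n
    rw [e_zero_succ]
    ring
  have hser : catalanGF z = 1 + z * catalanGF z ^ 2 := by
    conv_lhs => rw [catalanGF_eq_tsum_e]
    rw [h0, h1, gf_pow hz 1, e_zero_right]
    push_cast
    ring
  linear_combination hser

end analytic

theorem catalanTriangleB_column_gf (k : ℕ) (hk : 1 ≤ k) (z : ℂ)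
    (hz : ‖z‖ < 1 / 4) :
    (∑' n : ℕ, catalanTriangleB (n + k) k * z ^ (n + k)) = z ^ k * catalanGF z ^ (2 * k) ∧
      z ^ k * catalanGF z ^ (2 * k) = (catalanGF z - 1) ^ k := by
  obtain ⟨j, rfl⟩ : ∃ j, k = j + 1 := ⟨k - 1, by omega⟩
  constructor
  · have hBeq : ∀ n : ℕ, catalanTriangleB (n + (j+1)) (j+1) * z ^ (n + (j+1))
        = ((e (2*j+1) n : ℂ) * z ^ n) * z ^ (j+1) := by
      intro n
      have hm0 := e_mulId (2*j+1) n
      have hm : ((2*n + (2*j+1) + 1 : ℕ) : ℂ) * ((e (2*j+1) n : ℤ) : ℂ)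
          = (((2*j+1)+1 : ℕ) : ℂ) * ((2*n + (2*j+1) + 1).choose n : ℂ) := by
        exact_mod_cast congrArg (fun t : ℤ => (t : ℂ)) hm0
      have hB : catalanTriangleB (n + (j+1)) (j+1)
          = ((j:ℂ)+1) / ((n:ℂ)+j+1) * ((2*n + (2*j+1) + 1).choose n : ℂ) := by
        unfold catalanTriangleB
        rw [show (n + (j+1)) - (j+1) = n by omega,
          show 2 * (n + (j+1)) = 2*n + (2*j+1) + 1 by ring]
        push_cast
        ring
      have hne : ((n:ℂ)+j+1) ≠ 0 := by
        have : ((n + j + 1 : ℕ) : ℂ) ≠ 0 := Nat.cast_ne_zero.mpr (by omega)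
        push_cast at this
        convert this using 2 <;> push_cast <;> ring
      rw [hB]
      push_cast at hm
      have hE : ((e (2*j+1) n : ℤ) : ℂ) = ((j:ℂ)+1) / ((n:ℂ)+j+1)
          * ((2*n + (2*j+1) + 1).choose n : ℂ) := by
        field_simp
        push_cast
        linear_combination hm / 2
      rw [← hE]
      ring
    rw [tsum_congr hBeq, tsum_mul_right, gf_pow hz (2*j+1),
      show (2*j+1)+1 = 2*(j+1) by ring]
    ring
  · rw [catalanGF_quadratic hz, mul_pow, ← pow_mul, mul_comm 2 (j+1)]
end
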